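/- If N and N' are both infinitely generic structures in the multiverse and N' ≤ N (N' extends N), then N is an elementary substructure of N': for every sentence φ with parameters in N, N ⊨ φ iff N' ⊨ φ. -/
import Mathlib

namespace Robinson

/-- Formulas built from atoms (which may carry parameters), with conjunction,
disjunction, negation and an existential quantifier whose witnesses range over
a fixed type `W` of potential parameters/elements. -/
inductive Frm (atom : Type) (W : Type) : Type
  | atm : atom → Frm atom W
  | and : Frm atom W → Frm atom W → Frm atom W
  | or  : Frm atom W → Frm atom W → Frm atom W
  | not : Frm atom W → Frm atom W
  | ex  : (W → Frm atom W) → Frm atom W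

/-- A multiverse: a preorder of structures, `le Q N` meaning `Q` extends `N`
(`N` is a substructure of `Q`).  `mem a N` says the element `a` belongs to the
domain of `N` (so elements persist to extensions), and atomic sentences with
parameters in `N` are absolute between `N` and its extensions. -/
structure Multiverse (atom : Type) (W : Type) : Type 1 where
  M : Type
  le : M → M → Prop
  le_refl : ∀ N, le N N
  le_trans : ∀ {P Q R}, le P Q → le Q R → le P R
  satAtom : M → atom → Prop
  mem : W → M → Prop
  mem_mono : ∀ {a : W} {N Q : M}, le Q N → mem a N → mem a Q
  atom_absolute : ∀ {N Q : M} (p : atom), le Q N → (satAtom N p ↔ satAtom Q p)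

variable {atom W : Type}

/-- Robinson's infinite forcing relation on the multiverse. -/
def Forces (V : Multiverse atom W) : Frm atom W → V.M → Prop
  | .atm p, N => V.satAtom N p
  | .and φ ψ, N => Forces V φ N ∧ Forces V ψ N
  | .or φ ψ, N => Forces V φ N ∨ Forces V ψ N
  | .not φ, N => ∀ Q : V.M, V.le Q N → ¬ Forces V φ Q
  | .ex f, N => ∃ a : W, V.mem a N ∧ Forces V (f a) N

/-- Tarskian satisfaction. -/
def Sat (V : Multiverse atom W) : Frm atom W → V.M → Prop
  | .atm p, N => V.satAtom N p
  | .and φ ψ, N => Sat V φ N ∧ Sat V ψ N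
  | .or φ ψ, N => Sat V φ N ∨ Sat V ψ N
  | .not φ, N => ¬ Sat V φ N
  | .ex f, N => ∃ a : W, V.mem a N ∧ Sat V (f a) N

/-- `N` is infinitely generic: it forces every sentence or its negation. -/
def Generic (V : Multiverse atom W) (N : V.M) : Prop :=
  ∀ φ : Frm atom W, Forces V φ N ∨ Forces V (Frm.not φ) N

/-- Forcing is persistent under extension. -/
theorem forces_mono (V : Multiverse atom W) (φ : Frm atom W) :
    ∀ {N Q : V.M}, V.le Q N → Forces V φ N → Forces V φ Q := by
  induction φ with
  | atm p => intro N Q h hf; exact (V.atom_absolute p h).mp hf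
  | and φ ψ ihφ ihψ => intro N Q h hf; exact ⟨ihφ h hf.1, ihψ h hf.2⟩
  | or φ ψ ihφ ihψ =>
      intro N Q h hf
      exact hf.imp (ihφ h) (ihψ h)
  | not φ ih =>
      intro N Q h hf R hR
      exact hf R (V.le_trans hR h)
  | ex f ih =>
      intro N Q h hf
      obtain ⟨a, ha, hfa⟩ := hf
      exact ⟨a, V.mem_mono h ha, ih a h hfa⟩

/-- For a generic structure, forcing coincides with satisfaction. -/
theorem forces_iff_sat (V : Multiverse atom W) (φ : Frm atom W) :
    ∀ {N : V.M}, Generic V N → (Forces V φ N ↔ Sat V φ N) := by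
  induction φ with
  | atm p => intro N _; exact Iff.rfl
  | and φ ψ ihφ ihψ => intro N hN; exact and_congr (ihφ hN) (ihψ hN)
  | or φ ψ ihφ ihψ => intro N hN; exact or_congr (ihφ hN) (ihψ hN)
  | not φ ih =>
      intro N hN
      constructor
      · intro hf hs
        exact hf N (V.le_refl N) ((ih hN).mpr hs)
      · intro hs
        rcases hN φ with h | h
        · exact absurd ((ih hN).mp h) hs
        · exact h
  | ex f ih =>
      intro N hN
      exact exists_congr fun a => and_congr Iff.rfl (ih a hN)

end Robinson


namespace Robinson
/-- If N and N' are both infinitely generic and N' extends N, then N is an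
elementary substructure of N'. -/
theorem generic_elementary {atom W : Type} (V : Multiverse atom W) {N N' : V.M}
    (hN : Generic V N) (hN' : Generic V N') (hle : V.le N' N) :
    ∀ phi : Frm atom W, Sat V phi N ↔ Sat V phi N' := by
  intro phi
  rw [← forces_iff_sat V phi hN, ← forces_iff_sat V phi hN']
  constructor
  · exact forces_mono V phi hle
  · intro h
    rcases hN phi with h' | h'
    · exact h'
    · exact absurd h (forces_mono V _ hle h' N' (V.le_refl N'))
end Robinson
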